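/- Let I and O be finite sets with I nonempty and C : I → Finset O. Suppose the nonempty subsets Y₁, Y₂ ⊆ I both minimize the ratio |Γ(Y)| / |Y| over all nonempty subsets Y ⊆ I. Then Y₁ ∪ Y₂ also minimizes this ratio. -/

import Mathlib

open Finset

/-- If the nonempty sets of agents `Y₁` and `Y₂` both minimize the ratio
`|Γ(Y)| / |Y|` over all nonempty sets of agents `Y` (where
`Γ(Y) = ⋃_{i ∈ Y} C i`), then their union `Y₁ ∪ Y₂` is also a minimizer. -/
theorem union_of_ratio_minimizers_is_minimizer
    {I O : Type*} [Fintype I] [Nonempty I] [Fintype O]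
    [DecidableEq I] [DecidableEq O]
    (C : I → Finset O) (Y₁ Y₂ : Finset I)
    (h1 : Y₁.Nonempty) (h2 : Y₂.Nonempty)
    (hmin1 : ∀ Y : Finset I, Y.Nonempty →
      ((Y₁.biUnion C).card : ℝ) / (Y₁.card : ℝ) ≤
        ((Y.biUnion C).card : ℝ) / (Y.card : ℝ))
    (hmin2 : ∀ Y : Finset I, Y.Nonempty →
      ((Y₂.biUnion C).card : ℝ) / (Y₂.card : ℝ) ≤
        ((Y.biUnion C).card : ℝ) / (Y.card : ℝ)) :
    ∀ Y : Finset I, Y.Nonempty →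
      (((Y₁ ∪ Y₂).biUnion C).card : ℝ) / ((Y₁ ∪ Y₂).card : ℝ) ≤
        ((Y.biUnion C).card : ℝ) / (Y.card : ℝ) := by
  intro Y hY
  set r : ℝ := ((Y₁.biUnion C).card : ℝ) / (Y₁.card : ℝ) with hr
  have hn1 : (0 : ℝ) < (Y₁.card : ℝ) := by exact_mod_cast h1.card_pos
  have hn2 : (0 : ℝ) < (Y₂.card : ℝ) := by exact_mod_cast h2.card_pos
  have hrnn : 0 ≤ r := div_nonneg (by positivity) hn1.le
  have hreq : ((Y₂.biUnion C).card : ℝ) / (Y₂.card : ℝ) = r :=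
    le_antisymm (hmin2 Y₁ h1) (hmin1 Y₂ h2)
  have ha1 : ((Y₁.biUnion C).card : ℝ) = r * Y₁.card := by
    rw [hr, div_mul_cancel₀ _ hn1.ne']
  have ha2 : ((Y₂.biUnion C).card : ℝ) = r * Y₂.card := by
    rw [div_eq_iff hn2.ne'] at hreq
    exact hreq
  -- bound for the intersection
  have hI : r * ((Y₁ ∩ Y₂).card : ℝ) ≤ ((Y₁ ∩ Y₂).biUnion C).card := by
    rcases (Y₁ ∩ Y₂).eq_empty_or_nonempty with h | h
    · simp [h]
    · have hnI : (0 : ℝ) < ((Y₁ ∩ Y₂).card : ℝ) := by exact_mod_cast h.card_pos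
      have := hmin1 _ h
      exact (le_div_iff₀ hnI).mp this
  -- submodularity-type bound
  have hsub : (Y₁ ∩ Y₂).biUnion C ⊆ (Y₁.biUnion C) ∩ (Y₂.biUnion C) :=
    subset_inter (biUnion_subset_biUnion_of_subset_left C inter_subset_left)
      (biUnion_subset_biUnion_of_subset_left C inter_subset_right)
  have hcardsub : ((Y₁ ∩ Y₂).biUnion C).card ≤ ((Y₁.biUnion C) ∩ (Y₂.biUnion C)).card :=
    card_le_card hsub
  have hU : ((Y₁ ∪ Y₂).biUnion C).card + ((Y₁.biUnion C) ∩ (Y₂.biUnion C)).card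
      = (Y₁.biUnion C).card + (Y₂.biUnion C).card := by
    have : (Y₁ ∪ Y₂).biUnion C = Y₁.biUnion C ∪ Y₂.biUnion C := by
      ext x; simp [mem_biUnion, mem_union, or_and_right, exists_or]
    rw [this]
    exact card_union_add_card_inter _ _
  have hYcard : ((Y₁ ∪ Y₂).card : ℝ) + ((Y₁ ∩ Y₂).card : ℝ)
      = (Y₁.card : ℝ) + (Y₂.card : ℝ) := by
    exact_mod_cast card_union_add_card_inter Y₁ Y₂
  have hUR : (((Y₁ ∪ Y₂).biUnion C).card : ℝ) ≤ r * ((Y₁ ∪ Y₂).card : ℝ) := by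
    have h1' : (((Y₁ ∪ Y₂).biUnion C).card : ℝ)
        + (((Y₁.biUnion C) ∩ (Y₂.biUnion C)).card : ℝ)
        = ((Y₁.biUnion C).card : ℝ) + ((Y₂.biUnion C).card : ℝ) := by exact_mod_cast hU
    have h2' : (((Y₁ ∩ Y₂).biUnion C).card : ℝ)
        ≤ (((Y₁.biUnion C) ∩ (Y₂.biUnion C)).card : ℝ) := by exact_mod_cast hcardsub
    nlinarith [hI, ha1, ha2]
  have hnU : (0 : ℝ) < ((Y₁ ∪ Y₂).card : ℝ) := by
    exact_mod_cast (h1.mono (subset_union_left (s₂ := Y₂))).card_pos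
  calc (((Y₁ ∪ Y₂).biUnion C).card : ℝ) / ((Y₁ ∪ Y₂).card : ℝ)
      ≤ r := by rw [div_le_iff₀ hnU]; linarith
    _ ≤ _ := hmin1 Y hY
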